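/- For J > 0 and β < β_c = ln(2)/(2J), the fixed point P_∞^{(-)} = (coth(βJ)-1)/2 - (1/2)√((coth(βJ)-3)(coth(βJ)+1)) of the uniform parity map is real, lies in (0,1), and is stable. -/

import Mathlib

set_option maxHeartbeats 1000000 in
/-- for J > 0 and 0 < β < β_c, the fixed point P_∞^{(-)} lies in (0,1)
and is stable (the parity map has derivative of modulus < 1 there). -/
theorem minus_fixed_point_stable (β J : ℝ) (hJ : 0 < J) (hβ : 0 < β)
    (hc : β < Real.log 2 / (2*J)) :
    ∀ P : ℝ,
      P = (Real.cosh (β*J)/Real.sinh (β*J) - 1)/2 -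
        (1/2) * Real.sqrt ((Real.cosh (β*J)/Real.sinh (β*J) - 3) *
          (Real.cosh (β*J)/Real.sinh (β*J) + 1)) →
      0 < P ∧ P < 1 ∧
      HasDerivAt (fun Q : ℝ => (Real.sinh (β*J) + Q^2 * Real.cosh (β*J)) /
          (Real.cosh (β*J) + Q^2 * Real.sinh (β*J)))
        (2 * P / (Real.cosh (β*J) + P^2 * Real.sinh (β*J))^2) P ∧
      |2 * P / (Real.cosh (β*J) + P^2 * Real.sinh (β*J))^2| < 1 := by
  intro P hP
  set x : ℝ := β * J with hxdef
  have hx : 0 < x := mul_pos hβ hJ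
  have hs : 0 < Real.sinh x := Real.sinh_pos_iff.2 hx
  have hh : 0 < Real.cosh x := Real.cosh_pos x
  set c : ℝ := Real.cosh x / Real.sinh x with hcdef
  have hcs : c * Real.sinh x = Real.cosh x := div_mul_cancel₀ _ hs.ne'
  -- e^{2x} < 2
  have hE : Real.exp (2*x) < 2 := by
    have h2J : (0:ℝ) < 2*J := by linarith
    have h2x : 2*x < Real.log 2 := by
      have := (lt_div_iff₀ h2J).mp hc
      nlinarith
    calc Real.exp (2*x) < Real.exp (Real.log 2) := Real.exp_lt_exp.2 h2x
      _ = 2 := Real.exp_log two_pos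
  have hexx : Real.exp x * Real.exp x = Real.exp (2*x) := by
    rw [← Real.exp_add]; ring_nf
  have hexneg : Real.exp (-x) * Real.exp x = 1 := by
    rw [← Real.exp_add]; simp
  -- c > 3
  have hc3 : 3 < c := by
    rw [hcdef, lt_div_iff₀ hs]
    have hco := Real.cosh_eq x
    have hsi := Real.sinh_eq x
    nlinarith [Real.exp_pos x, Real.exp_pos (-x)]
  -- the square root
  set R : ℝ := Real.sqrt ((c - 3) * (c + 1)) with hRdef
  have hRnn : 0 ≤ R := Real.sqrt_nonneg _
  have hR2 : R^2 = (c - 3) * (c + 1) := by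
    rw [hRdef, Real.sq_sqrt (by nlinarith)]
  have hPx : P = (c - 1)/2 - (1/2) * R := hP
  -- 0 < P
  have hP0 : 0 < P := by
    have hRlt : R < c - 1 := by nlinarith
    rw [hPx]; linarith
  -- P < 1
  have hP1 : P < 1 := by
    have hRgt : c - 3 < R := by nlinarith
    rw [hPx]; linarith
  -- quadratic identity
  have hquad : P^2 + 1 = (c - 1) * P := by
    rw [hPx]; linear_combination hR2 / 4
  -- denominator identity
  have hcsh : Real.cosh x - Real.sinh x = Real.exp (-x) := Real.cosh_sub_sinh x
  have hD : Real.cosh x + P^2 * Real.sinh x = Real.exp (-x) * (1 + P) := by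
    linear_combination (1 + P) * hcsh + Real.sinh x * hquad + P * hcs
  have hDpos : 0 < Real.cosh x + P^2 * Real.sinh x := by positivity
  clear_value R c x
  refine ⟨hP0, hP1, ?_, ?_⟩
  · -- HasDerivAt
    have h1 : HasDerivAt (fun Q : ℝ => Real.sinh x + Q^2 * Real.cosh x)
        (2*P*Real.cosh x) P := by
      have := ((hasDerivAt_pow 2 P).mul_const (Real.cosh x)).const_add (Real.sinh x)
      refine this.congr_deriv ?_; norm_num
    have h2 : HasDerivAt (fun Q : ℝ => Real.cosh x + Q^2 * Real.sinh x)
        (2*P*Real.sinh x) P := by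
      have := ((hasDerivAt_pow 2 P).mul_const (Real.sinh x)).const_add (Real.cosh x)
      refine this.congr_deriv ?_; norm_num
    have := h1.div h2 hDpos.ne'
    refine this.congr_deriv ?_
    have key : 2*P*Real.cosh x * (Real.cosh x + P^2 * Real.sinh x) -
        (Real.sinh x + P^2 * Real.cosh x) * (2*P*Real.sinh x) = 2*P := by
      linear_combination (2*P) * Real.cosh_sq_sub_sinh_sq x
    rw [key]
  · -- stability
    have hnum : 0 < 2 * P := by linarith
    rw [abs_of_pos (div_pos hnum (pow_pos hDpos 2)), div_lt_one (pow_pos hDpos 2)]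
    have hkey : Real.exp (2*x) * Real.exp (-x)^2 = 1 := by
      nlinarith [hexx, hexneg, Real.exp_pos x, Real.exp_pos (-x)]
    have h2Pkey : 2*P*(Real.exp (2*x) * Real.exp (-x)^2) = 2*P := by rw [hkey]; ring
    rw [hD]
    have hinner : 2*P*Real.exp (2*x) < (1+P)^2 := by
      nlinarith [mul_pos hP0 (sub_pos.2 hE), sq_nonneg (1-P)]
    calc 2*P = (2*P*Real.exp (2*x)) * Real.exp (-x)^2 := by linear_combination -h2Pkey
      _ < (1+P)^2 * Real.exp (-x)^2 :=
          mul_lt_mul_of_pos_right hinner (pow_pos (Real.exp_pos (-x)) 2)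
      _ = (Real.exp (-x) * (1+P))^2 := by ring
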